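/- If T : C(X) → C(Y) is a unital linear bijection between the algebras of continuous complex-valued functions on compact Hausdorff spaces X and Y, and T is an isometry (with respect to the sup norms), then T is an algebra isomorphism. -/

import Mathlib

set_option linter.unusedSectionVars false
set_option linter.deprecated false

namespace BanachStoneAux

variable {X Y : Type*} [TopologicalSpace X] [TopologicalSpace Y]

/-- pointwise max of real parts, as a complex-valued continuous map. -/
noncomputable def rmax (f g : C(X, ℂ)) : C(X, ℂ) :=
  ⟨fun x => ((max (f x).re (g x).re : ℝ) : ℂ),
    Complex.continuous_ofReal.comp ((Complex.continuous_re.comp f.continuous).max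
      (Complex.continuous_re.comp g.continuous))⟩

lemma rmax_apply (f g : C(X, ℂ)) (x : X) :
    rmax f g x = ((max (f x).re (g x).re : ℝ) : ℂ) := rfl

lemma rmax_re (f g : C(X, ℂ)) (x : X) : (rmax f g x).re = max (f x).re (g x).re := by
  simp [rmax_apply]

lemma rmax_im (f g : C(X, ℂ)) (x : X) : (rmax f g x).im = 0 := by
  simp [rmax_apply]

section
variable [CompactSpace X] [CompactSpace Y]
variable (T : C(X, ℂ) →ₗ[ℂ] C(Y, ℂ)) (hunital : T 1 = 1)
  (hiso : ∀ f : C(X, ℂ), ‖T f‖ = ‖f‖)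

include hunital in
lemma nonemptyX (y : Y) : Nonempty X := by
  by_contra h
  have hX : IsEmpty X := not_nonempty_iff.mp h
  have h1 : (1 : C(X, ℂ)) = 0 := by ext x; exact absurd ⟨x⟩ h
  have : (1 : C(Y, ℂ)) = 0 := by rw [← hunital, h1, map_zero]
  have := ContinuousMap.congr_fun this y
  simp at this

include hunital hiso in
lemma norm_sub_smul (f : C(X, ℂ)) (c : ℂ) : ‖T f - c • 1‖ = ‖f - c • 1‖ := by
  have h : T (f - c • (1 : C(X, ℂ))) = T f - c • 1 := by
    rw [map_sub, map_smul, hunital]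
  rw [← h, hiso]

include hunital hiso in
lemma realpres {f : C(X, ℂ)} (hf : ∀ x, (f x).im = 0) (y : Y) : (T f y).im = 0 := by
  set a := (T f y).re with ha
  set b := (T f y).im with hb
  have key : ∀ t : ℝ, a ^ 2 + (b - t) ^ 2 ≤ ‖f‖ ^ 2 + t ^ 2 := by
    intro t
    have hnorm : ‖T f - ((t : ℂ) * Complex.I) • 1‖ = ‖f - ((t : ℂ) * Complex.I) • 1‖ :=
      norm_sub_smul T hunital hiso f _
    have hle : ‖f - ((t : ℂ) * Complex.I) • 1‖ ≤ Real.sqrt (‖f‖ ^ 2 + t ^ 2) := by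
      apply ContinuousMap.norm_le _ (Real.sqrt_nonneg _) |>.mpr
      intro x
      have hx : ((f - ((t : ℂ) * Complex.I) • 1) x) = f x - (t : ℂ) * Complex.I := by
        simp
      rw [hx]
      rw [show Real.sqrt (‖f‖ ^ 2 + t ^ 2) = Real.sqrt (‖f‖ ^ 2 + t ^ 2) from rfl]
      have h1 : ‖f x - (t : ℂ) * Complex.I‖ ^ 2 = (f x).re ^ 2 + t ^ 2 := by
        rw [Complex.sq_norm, Complex.normSq_apply]
        simp [hf x]
        ring
      have h2 : (f x).re ^ 2 ≤ ‖f‖ ^ 2 := by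
        have : |(f x).re| ≤ ‖f x‖ := Complex.abs_re_le_norm _
        have h3 : ‖f x‖ ≤ ‖f‖ := f.norm_coe_le_norm x
        calc (f x).re ^ 2 = |(f x).re| ^ 2 := (sq_abs _).symm
          _ ≤ ‖f‖ ^ 2 := pow_le_pow_left₀ (abs_nonneg _) (this.trans h3) 2
      have : ‖f x - (t : ℂ) * Complex.I‖ ^ 2 ≤ ‖f‖ ^ 2 + t ^ 2 := by rw [h1]; linarith
      calc ‖f x - (t : ℂ) * Complex.I‖ = Real.sqrt (‖f x - (t : ℂ) * Complex.I‖ ^ 2) := by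
            rw [Real.sqrt_sq (norm_nonneg _)]
        _ ≤ Real.sqrt (‖f‖ ^ 2 + t ^ 2) := Real.sqrt_le_sqrt this
    have hpt : ‖T f y - (t : ℂ) * Complex.I‖ ≤ Real.sqrt (‖f‖ ^ 2 + t ^ 2) := by
      have hx : ((T f - ((t : ℂ) * Complex.I) • 1) y) = T f y - (t : ℂ) * Complex.I := by simp
      calc ‖T f y - (t : ℂ) * Complex.I‖ = ‖(T f - ((t : ℂ) * Complex.I) • 1) y‖ := by rw [hx]
        _ ≤ ‖T f - ((t : ℂ) * Complex.I) • 1‖ := ContinuousMap.norm_coe_le_norm _ y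
        _ = ‖f - ((t : ℂ) * Complex.I) • 1‖ := hnorm
        _ ≤ Real.sqrt (‖f‖ ^ 2 + t ^ 2) := hle
    have hsq : ‖T f y - (t : ℂ) * Complex.I‖ ^ 2 ≤ ‖f‖ ^ 2 + t ^ 2 := by
      have h0 : (0:ℝ) ≤ ‖f‖ ^ 2 + t ^ 2 := by positivity
      nlinarith [norm_nonneg (T f y - (t : ℂ) * Complex.I), Real.sq_sqrt h0,
        Real.sqrt_nonneg (‖f‖ ^ 2 + t ^ 2)]
    have hre : ‖T f y - (t : ℂ) * Complex.I‖ ^ 2 = a ^ 2 + (b - t) ^ 2 := by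
      rw [Complex.sq_norm, Complex.normSq_apply]
      simp only [Complex.sub_re, Complex.sub_im, Complex.mul_re, Complex.mul_im,
        Complex.ofReal_re, Complex.ofReal_im, Complex.I_re, Complex.I_im, ← ha, ← hb]
      ring
    linarith [hsq, hre.symm.le]
  by_contra hb0
  have key2 : ∀ t : ℝ, a ^ 2 + b ^ 2 - 2 * b * t ≤ ‖f‖ ^ 2 := by
    intro t; nlinarith [key t]
  have h2b : (2 : ℝ) * b ≠ 0 := by simpa using hb0
  have ht : 2 * b * ((a ^ 2 + b ^ 2 - ‖f‖ ^ 2 - 1) / (2 * b)) = a ^ 2 + b ^ 2 - ‖f‖ ^ 2 - 1 := by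
    field_simp
  have := key2 ((a ^ 2 + b ^ 2 - ‖f‖ ^ 2 - 1) / (2 * b))
  rw [ht] at this
  linarith


include hunital hiso in
lemma bound {f : C(X, ℂ)} (hf : ∀ x, (f x).im = 0) {m M : ℝ}
    (h : ∀ x, m ≤ (f x).re ∧ (f x).re ≤ M) (y : Y) :
    m ≤ (T f y).re ∧ (T f y).re ≤ M := by
  have hXne : Nonempty X := nonemptyX T hunital y
  obtain ⟨x₀⟩ := hXne
  have hmM : m ≤ M := (h x₀).1.trans (h x₀).2
  set c : ℝ := (m + M) / 2 with hc
  set r : ℝ := (M - m) / 2 with hr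
  have hr0 : 0 ≤ r := by rw [hr]; linarith
  have hnorm : ‖f - ((c : ℂ)) • 1‖ ≤ r := by
    apply ContinuousMap.norm_le _ hr0 |>.mpr
    intro x
    have hx : (f - ((c : ℂ)) • 1) x = f x - (c : ℂ) := by simp
    rw [hx]
    have hreal : f x - (c : ℂ) = (((f x).re - c : ℝ) : ℂ) := by
      apply Complex.ext <;> simp [hf x]
    rw [hreal, Complex.norm_real]
    rw [Real.norm_eq_abs, abs_le]
    constructor <;> [linarith [(h x).1]; linarith [(h x).2]]
  have hTnorm : ‖T f - ((c : ℂ)) • 1‖ ≤ r := by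
    rw [norm_sub_smul T hunital hiso]; exact hnorm
  have hpt : ‖T f y - (c : ℂ)‖ ≤ r := by
    have hx : (T f - ((c : ℂ)) • 1) y = T f y - (c : ℂ) := by simp
    calc ‖T f y - (c : ℂ)‖ = ‖(T f - ((c : ℂ)) • 1) y‖ := by rw [hx]
      _ ≤ ‖T f - ((c : ℂ)) • 1‖ := ContinuousMap.norm_coe_le_norm _ y
      _ ≤ r := hTnorm
  have him : (T f y).im = 0 := realpres T hunital hiso hf y
  have hreal : T f y - (c : ℂ) = (((T f y).re - c : ℝ) : ℂ) := by
    apply Complex.ext <;> simp [him]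
  rw [hreal, Complex.norm_real, Real.norm_eq_abs, abs_le] at hpt
  constructor <;> [linarith [hpt.1]; linarith [hpt.2]]

include hunital hiso in
lemma mono {f g : C(X, ℂ)} (hf : ∀ x, (f x).im = 0) (hg : ∀ x, (g x).im = 0)
    (hle : ∀ x, (f x).re ≤ (g x).re) (y : Y) : (T f y).re ≤ (T g y).re := by
  have hgf : ∀ x, ((g - f) x).im = 0 := by
    intro x; simp [hf x, hg x]
  have hb : ∀ x, (0:ℝ) ≤ ((g - f) x).re ∧ ((g - f) x).re ≤ ‖g - f‖ := by
    intro x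
    constructor
    · simp [sub_nonneg]; exact hle x
    · calc ((g - f) x).re ≤ |((g - f) x).re| := le_abs_self _
        _ ≤ ‖(g - f) x‖ := Complex.abs_re_le_norm _
        _ ≤ ‖g - f‖ := ContinuousMap.norm_coe_le_norm _ x
  have := (bound T hunital hiso hgf hb y).1
  have heq : T (g - f) y = T g y - T f y := by rw [map_sub]; simp
  rw [heq] at this
  simp only [Complex.sub_re] at this
  linarith

end
end BanachStoneAux

open BanachStoneAux

/-- Banach–Stone: a unital linear isometric bijection between `C(X, ℂ)` and `C(Y, ℂ)`
for compact Hausdorff `X`, `Y` is an algebra isomorphism (i.e. multiplicative). -/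
theorem banach_stone_isometry
    {X Y : Type*} [TopologicalSpace X] [CompactSpace X] [T2Space X]
    [TopologicalSpace Y] [CompactSpace Y] [T2Space Y]
    (T : C(X, ℂ) →ₗ[ℂ] C(Y, ℂ))
    (hbij : Function.Bijective T)
    (hunital : T 1 = 1)
    (hiso : ∀ f : C(X, ℂ), ‖T f‖ = ‖f‖) :
    ∀ f g : C(X, ℂ), T (f * g) = T f * T g := by
  classical
  -- the inverse map
  let E := LinearEquiv.ofBijective T hbij
  let S : C(Y, ℂ) →ₗ[ℂ] C(X, ℂ) := E.symm.toLinearMap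
  have hTS : ∀ g : C(Y, ℂ), T (S g) = g := by
    intro g
    have : E (E.symm g) = g := E.apply_symm_apply g
    simpa [E, S, LinearEquiv.ofBijective_apply] using this
  have hST : ∀ f : C(X, ℂ), S (T f) = f := by
    intro f
    have : E.symm (E f) = f := E.symm_apply_apply f
    simpa [E, S, LinearEquiv.ofBijective_apply] using this
  have hSunital : S 1 = 1 := by
    conv_lhs => rw [← hunital]
    exact hST 1
  have hSiso : ∀ g : C(Y, ℂ), ‖S g‖ = ‖g‖ := by
    intro g
    conv_rhs => rw [← hTS g]
    rw [hiso]
  -- lattice property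
  have lat : ∀ (f g : C(X, ℂ)), (∀ x, (f x).im = 0) → (∀ x, (g x).im = 0) → ∀ y : Y,
      (T (rmax f g) y).re = max (T f y).re (T g y).re := by
    intro f g hf hg y
    have hrm : ∀ x, (rmax f g x).im = 0 := rmax_im f g
    have hTf : ∀ y', (T f y').im = 0 := realpres T hunital hiso hf
    have hTg : ∀ y', (T g y').im = 0 := realpres T hunital hiso hg
    apply le_antisymm
    · set h := rmax (T f) (T g) with hh
      have hhim : ∀ y', (h y').im = 0 := rmax_im _ _
      have hShim : ∀ x, (S h x).im = 0 := realpres S hSunital hSiso hhim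
      have hkf : ∀ x, (f x).re ≤ (S h x).re := by
        intro x
        have hm : ∀ y', (T f y').re ≤ (h y').re := by
          intro y'; rw [hh, rmax_re]; exact le_max_left _ _
        have := mono S hSunital hSiso hTf hhim hm x
        rwa [hST f] at this
      have hkg : ∀ x, (g x).re ≤ (S h x).re := by
        intro x
        have hm : ∀ y', (T g y').re ≤ (h y').re := by
          intro y'; rw [hh, rmax_re]; exact le_max_right _ _
        have := mono S hSunital hSiso hTg hhim hm x
        rwa [hST g] at this
      have hm2 : ∀ x, (rmax f g x).re ≤ (S h x).re := by
        intro x; rw [rmax_re]; exact max_le (hkf x) (hkg x)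
      have := mono T hunital hiso hrm hShim hm2 y
      rwa [hTS h, hh, rmax_re] at this
    · apply max_le
      · exact mono T hunital hiso hf hrm (fun x => by rw [rmax_re]; exact le_max_left _ _) y
      · exact mono T hunital hiso hg hrm (fun x => by rw [rmax_re]; exact le_max_right _ _) y
  -- nonnegative real functions killed by ev_y ∘ T have a zero
  have zero : ∀ (y : Y) (g : C(X, ℂ)), (∀ x, (g x).im = 0) → (∀ x, 0 ≤ (g x).re) →
      (T g y).re = 0 → ∃ x, (g x).re = 0 := by
    intro y g hg hpos hTg
    by_contra hz
    push_neg at hz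
    haveI hXne : Nonempty X := nonemptyX T hunital y
    obtain ⟨x₀, -, hx₀⟩ := isCompact_univ.exists_isMinOn Set.univ_nonempty
      ((Complex.continuous_re.comp g.continuous).continuousOn)
    have hε : 0 < (g x₀).re := lt_of_le_of_ne (hpos x₀) (Ne.symm (hz x₀))
    have hb : ∀ x, (g x₀).re ≤ (g x).re ∧ (g x).re ≤ ‖g‖ := by
      intro x
      refine ⟨hx₀ (Set.mem_univ x), ?_⟩
      calc (g x).re ≤ |(g x).re| := le_abs_self _
        _ ≤ ‖g x‖ := Complex.abs_re_le_norm _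
        _ ≤ ‖g‖ := ContinuousMap.norm_coe_le_norm _ x
    have := (bound T hunital hiso hg hb y).1
    linarith
  -- the absolute-value gadget
  have habs : ∀ (y : Y) (f : C(X, ℂ)), (∀ x, (f x).im = 0) → ∃ g : C(X, ℂ),
      (∀ x, (g x).im = 0) ∧ (∀ x, (g x).re = |(f x).re - (T f y).re|) ∧ (T g y).re = 0 := by
    intro y f hf
    set c : ℂ := (((T f y).re : ℝ) : ℂ) with hcdef
    set u : C(X, ℂ) := f - c • 1 with hudef
    have hu : ∀ x, (u x).im = 0 := by intro x; simp [hudef, hcdef, hf x]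
    have hnu : ∀ x, ((-u) x).im = 0 := by intro x; simp [hu x]
    have hure : ∀ x, (u x).re = (f x).re - (T f y).re := by intro x; simp [hudef, hcdef]
    have hTu : (T u y).re = 0 := by
      have h1 : T u = T f - c • 1 := by rw [hudef, map_sub, map_smul, hunital]
      rw [h1]
      simp [hcdef]
    refine ⟨rmax u (-u), rmax_im _ _, ?_, ?_⟩
    · intro x
      rw [rmax_re, ← hure x]
      have : ((-u) x).re = -((u x).re) := by simp
      rw [this, ← abs_eq_max_neg]
    · rw [lat u (-u) hu hnu y]
      have hTnu : (T (-u) y).re = -((T u y).re) := by rw [map_neg]; simp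
      rw [hTnu, hTu]
      simp
  -- the evaluation point
  have evalpt : ∀ y : Y, ∃ x : X, ∀ f : C(X, ℂ), (∀ x', (f x').im = 0) →
      (f x).re = (T f y).re := by
    intro y
    haveI hXne : Nonempty X := nonemptyX T hunital y
    set ι := {f : C(X, ℂ) // ∀ x, (f x).im = 0} with hι
    haveI hιne : Nonempty ι := ⟨⟨0, by simp⟩⟩
    set Z : ι → Set X := fun f => {x | (f.1 x).re = (T f.1 y).re} with hZ
    have hZcl : ∀ f : ι, IsClosed (Z f) :=
      fun f => isClosed_eq (Complex.continuous_re.comp f.1.continuous) continuous_const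
    have hZc : ∀ f : ι, IsCompact (Z f) := fun f => (hZcl f).isCompact
    have hZne : ∀ f : ι, (Z f).Nonempty := by
      intro f
      obtain ⟨g, hg, hgre, hTg⟩ := habs y f.1 f.2
      obtain ⟨x, hx⟩ := zero y g hg (fun x => (hgre x) ▸ abs_nonneg _) hTg
      refine ⟨x, ?_⟩
      have := hgre x ▸ hx
      have h0 : (f.1 x).re - (T f.1 y).re = 0 := abs_eq_zero.mp this
      simpa [hZ, sub_eq_zero] using h0
    have hdir : Directed (· ⊇ ·) Z := by
      intro f g
      obtain ⟨gf, hgf, hgfre, hTgf⟩ := habs y f.1 f.2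
      obtain ⟨gg, hgg, hggre, hTgg⟩ := habs y g.1 g.2
      have hsum : ∀ x, ((gf + gg) x).im = 0 := by intro x; simp [hgf x, hgg x]
      refine ⟨⟨gf + gg, hsum⟩, ?_, ?_⟩ <;>
      · intro x hx
        have hT0 : (T (gf + gg) y).re = 0 := by
          rw [map_add]
          simp [ContinuousMap.add_apply, Complex.add_re, hTgf, hTgg]
        have hxeq : ((gf + gg) x).re = 0 := by
          have := hx
          simp only [hZ, Set.mem_setOf_eq] at this
          rw [this, hT0]
        have hexp : |(f.1 x).re - (T f.1 y).re| + |(g.1 x).re - (T g.1 y).re| = 0 := by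
          rw [← hgfre x, ← hggre x]
          simpa [ContinuousMap.add_apply, Complex.add_re] using hxeq
        have h1 : |(f.1 x).re - (T f.1 y).re| = 0 := by
          have := abs_nonneg ((f.1 x).re - (T f.1 y).re)
          have := abs_nonneg ((g.1 x).re - (T g.1 y).re)
          linarith
        have h2 : |(g.1 x).re - (T g.1 y).re| = 0 := by
          have := abs_nonneg ((f.1 x).re - (T f.1 y).re)
          have := abs_nonneg ((g.1 x).re - (T g.1 y).re)
          linarith
        first
        | exact sub_eq_zero.mp (abs_eq_zero.mp h1)
        | exact sub_eq_zero.mp (abs_eq_zero.mp h2)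
    obtain ⟨x, hx⟩ := IsCompact.nonempty_iInter_of_directed_nonempty_isCompact_isClosed
      Z hdir hZne hZc hZcl
    refine ⟨x, fun f hf => ?_⟩
    have := Set.mem_iInter.mp hx ⟨f, hf⟩
    simpa [hZ] using this
  -- T is evaluation-composition, hence multiplicative
  have hev : ∀ y : Y, ∃ x : X, ∀ h : C(X, ℂ), T h y = h x := by
    intro y
    obtain ⟨x, hx⟩ := evalpt y
    refine ⟨x, fun h => ?_⟩
    set hr : C(X, ℂ) := ⟨fun x' => (((h x').re : ℝ) : ℂ),
      Complex.continuous_ofReal.comp (Complex.continuous_re.comp h.continuous)⟩ with hhr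
    set hi : C(X, ℂ) := ⟨fun x' => (((h x').im : ℝ) : ℂ),
      Complex.continuous_ofReal.comp (Complex.continuous_im.comp h.continuous)⟩ with hhi
    have hrim : ∀ x', (hr x').im = 0 := by intro x'; simp [hhr]
    have hiim : ∀ x', (hi x').im = 0 := by intro x'; simp [hhi]
    have hdecomp : h = hr + Complex.I • hi := by
      ext x'
      apply Complex.ext <;> simp [hhr, hhi]
    have h1 : T hr y = (((h x).re : ℝ) : ℂ) := by
      apply Complex.ext
      · have := (hx hr hrim).symm
        simpa [hhr] using this
      · simp [realpres T hunital hiso hrim y]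
    have h2 : T hi y = (((h x).im : ℝ) : ℂ) := by
      apply Complex.ext
      · have := (hx hi hiim).symm
        simpa [hhi] using this
      · simp [realpres T hunital hiso hiim y]
    calc T h y = T hr y + Complex.I * T hi y := by
          rw [hdecomp, map_add, map_smul]
          simp
      _ = (((h x).re : ℝ) : ℂ) + Complex.I * (((h x).im : ℝ) : ℂ) := by rw [h1, h2]
      _ = h x := by
          apply Complex.ext <;> simp
  intro f g
  ext y
  obtain ⟨x, hx⟩ := hev y
  rw [ContinuousMap.mul_apply, hx (f * g), hx f, hx g, ContinuousMap.mul_apply]
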